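/- A poset P on {1,…,n} is an interval-poset (i.e. satisfies: a ≺_P c implies b ≺_P c for all a < b < c, and c ≺_P a implies b ≺_P a for all a < b < c) if and only if there exist binary trees T ≤ T' of size n in the Tamari order such that the relations of P are exactly those of the decreasing forest dec(T) together with those of the increasing forest inc(T'). -/

import Mathlib

open Polynomial

/-- A binary tree: either the empty tree or a pair of binary trees
(left and right subtrees) grafted on an internal node. -/
inductive BinTree : Type
  | leaf : BinTree
  | node : BinTree → BinTree → BinTree

namespace BinTree

/-- The size of a binary tree: its number of internal nodes. -/
def size : BinTree → ℕ
  | leaf => 0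
  | node l r => l.size + r.size + 1

/-- One right rotation somewhere in the tree: `Rot T T'` means that `T'` is obtained
from `T` by replacing one subtree of the form `y(x(A,B),C)` by `x(A,y(B,C))`. -/
inductive Rot : BinTree → BinTree → Prop
  | root (A B C : BinTree) : Rot (node (node A B) C) (node A (node B C))
  | left {L L' : BinTree} (R : BinTree) : Rot L L' → Rot (node L R) (node L' R)
  | right (L : BinTree) {R R' : BinTree} : Rot R R' → Rot (node L R) (node L R')

/-- The Tamari order: `TamariLE T T'` iff `T'` is obtained from `T` by a (possibly empty)
sequence of right rotations. -/
def TamariLE (T T' : BinTree) : Prop := Relation.ReflTransGen Rot T T'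

/-- The Tamari polynomial `B_T ∈ ℤ[x]`: `B_∅ = 1` and for `T = x(L,R)`, `B_T` is the
unique polynomial with `(x-1)·B_T = x·B_L·(x·B_R - B_R(1))` (exact division by the
monic polynomial `X - 1`, the right-hand side vanishing at `x = 1`). -/
noncomputable def tamPoly : BinTree → Polynomial ℤ
  | leaf => 1
  | node l r =>
      (X * tamPoly l * (X * tamPoly r - C ((tamPoly r).eval 1))) /ₘ (X - C 1)

/-- The mirror Tamari polynomial, obtained by exchanging the roles of the left and
right subtrees in the recursive definition of the Tamari polynomial. -/
noncomputable def tamPolyMirror : BinTree → Polynomial ℤ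
  | leaf => 1
  | node l r =>
      (X * tamPolyMirror r * (X * tamPolyMirror l - C ((tamPolyMirror l).eval 1))) /ₘ (X - C 1)

/-- The number of nodes on the left border of a binary tree. -/
def leftBorder : BinTree → ℕ
  | leaf => 0
  | node l _ => l.leftBorder + 1

/-- The number of nodes on the right border of a binary tree. -/
def rightBorder : BinTree → ℕ
  | leaf => 0
  | node _ r => r.rightBorder + 1

/-- `inSub T a b`: in the unique binary-search-tree labelling of `T` by `1,…,size T`
(all labels of the left subtree of a node are smaller than its label, all labels of its
right subtree are larger), the node labelled `a` belongs to the subtree rooted at the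
node labelled `b` (in particular `inSub T a a` holds for every node label `a`). -/
def inSub : BinTree → ℕ → ℕ → Prop
  | leaf => fun _ _ => False
  | node l r => fun a b =>
      (b = l.size + 1 ∧ 1 ≤ a ∧ a ≤ l.size + r.size + 1) ∨
      inSub l a b ∨
      (l.size + 1 < a ∧ l.size + 1 < b ∧ inSub r (a - (l.size + 1)) (b - (l.size + 1)))

/-- The binary search tree poset of `T`: `bstRel T a b` iff `a ≺_T b`, i.e. `a ≠ b` and
the node labelled `a` is in the subtree rooted at the node labelled `b`. -/
def bstRel (T : BinTree) (a b : ℕ) : Prop := a ≠ b ∧ inSub T a b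

/-- The increasing forest `inc(T)`: `a ≺ b` iff `a < b` and `a ≺_T b`. -/
def incRel (T : BinTree) (a b : ℕ) : Prop := a < b ∧ bstRel T a b

/-- The decreasing forest `dec(T)`: `b ≺ a` iff `b > a` and `b ≺_T a`. -/
def decRel (T : BinTree) (a b : ℕ) : Prop := b < a ∧ bstRel T a b

/-- The relations of the interval-poset `IP[T,T']`: exactly those of `dec(T)`
together with those of `inc(T')`. -/
def IPrel (T T' : BinTree) (a b : ℕ) : Prop := decRel T a b ∨ incRel T' a b

end BinTree

open BinTree

/-- `σ` is a linear extension of the strict relation `rel` on `{1,…,n}`: reading the word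
`σ(1)…σ(n)` (the `i`-th letter being the label `(σ i : ℕ) + 1`), whenever `rel a b` holds
the letter `a` appears before the letter `b`. -/
def IsLinExt (n : ℕ) (rel : ℕ → ℕ → Prop) (σ : Equiv.Perm (Fin n)) : Prop :=
  ∀ i j : Fin n, rel ((σ i : ℕ) + 1) ((σ j : ℕ) + 1) → i < j

/-- An interval-poset of size `n`: a (strict) poset on `{1,…,n}` such that
`a ≺ c` implies `b ≺ c` for all `a < b < c`, and `c ≺ a` implies `b ≺ a` for all
`a < b < c`. -/
def IsIntervalPoset (n : ℕ) (rel : ℕ → ℕ → Prop) : Prop :=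
  (∀ a b, rel a b → 1 ≤ a ∧ a ≤ n ∧ 1 ≤ b ∧ b ≤ n) ∧
  (∀ a, ¬ rel a a) ∧
  (∀ a b c, rel a b → rel b c → rel a c) ∧
  (∀ a b c, a < b → b < c → rel a c → rel b c) ∧
  (∀ a b c, a < b → b < c → rel c a → rel b a)

/-- `trees(P)` : the number of connected components of the forest formed by the decreasing
relations of `P`, i.e. the number of `k ∈ {1,…,n}` such that there is no `j < k`
with `k ≺_P j`. -/
noncomputable def treeStat (n : ℕ) (rel : ℕ → ℕ → Prop) : ℕ :=
  Set.ncard {k : ℕ | 1 ≤ k ∧ k ≤ n ∧ ∀ j, j < k → ¬ rel k j}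

/-- The composition `𝔹(I1,I2)` of two interval-posets of sizes `k1` and `k2`:
the set of interval-posets `I` of size `k1+k2+1` such that
(i) the relations of `I` among `1,…,k1` are exactly those of `I1`,
(ii) the relations of `I` among `k1+2,…,k1+k2+1` are exactly those of `I2` shifted
by `k1+1`, (iii) `i ≺_I k1+1` for all `i ≤ k1`, and (iv) there is no relation
`k1+1 ≺_I j` for `j > k1+1`. -/
def Comp (k1 k2 : ℕ) (I1 I2 : ℕ → ℕ → Prop) : Set (ℕ → ℕ → Prop) :=
  {I | IsIntervalPoset (k1 + k2 + 1) I ∧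
    (∀ a b, 1 ≤ a → a ≤ k1 → 1 ≤ b → b ≤ k1 → (I a b ↔ I1 a b)) ∧
    (∀ a b, k1 + 2 ≤ a → a ≤ k1 + k2 + 1 → k1 + 2 ≤ b → b ≤ k1 + k2 + 1 →
      (I a b ↔ I2 (a - (k1 + 1)) (b - (k1 + 1)))) ∧
    (∀ i, 1 ≤ i → i ≤ k1 → I i (k1 + 1)) ∧
    (∀ j, k1 + 1 < j → ¬ I (k1 + 1) j)}

/-- The co-inversions of a permutation `σ` of `{1,…,n}` (written as the word
`σ(1)…σ(n)`): pairs `(σ(i), σ(j))` with `i < j` and `σ(i) > σ(j)`. -/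
def coinv (n : ℕ) (σ : Equiv.Perm (Fin n)) : Set (Fin n × Fin n) :=
  {p | ∃ i j : Fin n, i < j ∧ σ j < σ i ∧ p = (σ i, σ j)}

namespace IPAux

open BinTree

/-- left subtree size of node labelled `i` in the BST labelling -/
def lsub : BinTree → ℕ → ℕ
  | .leaf, _ => 0
  | .node l r, i =>
    if i < l.size + 1 then lsub l i
    else if i = l.size + 1 then l.size
    else lsub r (i - (l.size + 1))

/-- right subtree size of node labelled `i` in the BST labelling -/
def rsub : BinTree → ℕ → ℕ
  | .leaf, _ => 0
  | .node l r, i =>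
    if i < l.size + 1 then rsub l i
    else if i = l.size + 1 then r.size
    else rsub r (i - (l.size + 1))

lemma sub_zero (T : BinTree) : ∀ i, (i = 0 ∨ T.size < i) → rsub T i = 0 ∧ lsub T i = 0 := by
  induction T with
  | leaf => intro i _; simp [rsub, lsub]
  | node l r ihl ihr =>
    intro i hi
    simp only [BinTree.size] at hi
    rcases hi with h0 | hgt
    · subst h0
      simp only [rsub, lsub, if_pos (by omega : 0 < l.size + 1)]
      exact ⟨(ihl 0 (Or.inl rfl)).1, (ihl 0 (Or.inl rfl)).2⟩
    · have h1 : ¬ i < l.size + 1 := by omega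
      have h2 : i ≠ l.size + 1 := by omega
      simp only [rsub, lsub, if_neg h1, if_neg h2]
      exact ⟨(ihr _ (Or.inr (by omega))).1, (ihr _ (Or.inr (by omega))).2⟩

lemma rsub_zero (T : BinTree) (i : ℕ) (h : i = 0 ∨ T.size < i) : rsub T i = 0 :=
  (sub_zero T i h).1

lemma lsub_zero (T : BinTree) (i : ℕ) (h : i = 0 ∨ T.size < i) : lsub T i = 0 :=
  (sub_zero T i h).2

lemma sub_bound (T : BinTree) : ∀ i, 1 ≤ i → i ≤ T.size →
    i + rsub T i ≤ T.size ∧ lsub T i < i := by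
  induction T with
  | leaf => intro i h1 h2; simp [BinTree.size] at h2; omega
  | node l r ihl ihr =>
    intro i h1 h2
    simp only [BinTree.size] at h2 ⊢
    by_cases hlt : i < l.size + 1
    · simp only [rsub, lsub, if_pos hlt]
      have := ihl i h1 (by omega)
      omega
    · by_cases heq : i = l.size + 1
      · simp only [rsub, lsub, if_neg hlt, if_pos heq]; omega
      · simp only [rsub, lsub, if_neg hlt, if_neg heq]
        have := ihr (i - (l.size + 1)) (by omega) (by omega)
        omega

lemma rsub_bound (T : BinTree) (i : ℕ) (h1 : 1 ≤ i) (h2 : i ≤ T.size) :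
    i + rsub T i ≤ T.size := (sub_bound T i h1 h2).1

lemma lsub_lt (T : BinTree) (i : ℕ) (h1 : 1 ≤ i) (h2 : i ≤ T.size) :
    lsub T i < i := (sub_bound T i h1 h2).2

/-- characterization of `inSub` by the subtree interval -/
lemma inSub_iff (T : BinTree) : ∀ a b, inSub T a b ↔
    (1 ≤ b ∧ b ≤ T.size ∧ b - lsub T b ≤ a ∧ a ≤ b + rsub T b) := by
  induction T with
  | leaf => intro a b; simp [inSub, BinTree.size]; omega
  | node l r ihl ihr =>
    intro a b
    simp only [inSub, BinTree.size]
    by_cases hlt : b < l.size + 1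
    · simp only [rsub, lsub, if_pos hlt]
      rw [ihl]
      constructor
      · rintro (⟨h, _⟩ | h | ⟨_, h, _⟩)
        · omega
        · exact ⟨h.1, by omega, h.2.2⟩
        · omega
      · rintro ⟨h1, h2, h3, h4⟩
        exact Or.inr (Or.inl ⟨h1, by omega, h3, h4⟩)
    · by_cases heq : b = l.size + 1
      · simp only [rsub, lsub, if_neg hlt, if_pos heq]
        constructor
        · rintro (⟨_, h2, h3⟩ | h | ⟨_, h, _⟩)
          · omega
          · rw [ihl] at h; omega
          · omega
        · intro h
          exact Or.inl ⟨heq, by omega, by omega⟩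
      · simp only [rsub, lsub, if_neg hlt, if_neg heq]
        rw [ihl, ihr]
        constructor
        · rintro (⟨h, _⟩ | h | ⟨h1, h2, h3, h4, h5, h6⟩)
          · omega
          · omega
          · have := lsub_lt r (b - (l.size + 1)) (by omega) h4
            omega
        · rintro ⟨h1, h2, h3, h4⟩
          have hb : 1 ≤ b - (l.size + 1) := by omega
          have hb2 : b - (l.size + 1) ≤ r.size := by omega
          have hll := lsub_lt r (b - (l.size + 1)) hb hb2
          refine Or.inr (Or.inr ⟨by omega, by omega, hb, hb2, by omega, by omega⟩)

lemma inSub_bounds {T : BinTree} {a b : ℕ} (h : inSub T a b) :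
    1 ≤ a ∧ a ≤ T.size ∧ 1 ≤ b ∧ b ≤ T.size := by
  rw [inSub_iff] at h
  obtain ⟨h1, h2, h3, h4⟩ := h
  have := lsub_lt T b h1 h2
  have := rsub_bound T b h1 h2
  omega

/-- laminarity, right version: if `j` lies in the right subtree interval of `i`,
then `j`'s interval is contained in `(i, i + rsub i]`. -/
lemma nest_r (T : BinTree) : ∀ i j, 1 ≤ i → i < j → j ≤ i + rsub T i →
    j + rsub T j ≤ i + rsub T i ∧ i < j - lsub T j := by
  induction T with
  | leaf => intro i j h1 h2 h3; simp [rsub] at h3; omega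
  | node l r ihl ihr =>
    intro i j h1 h2 h3
    by_cases hi : i < l.size + 1
    · have hb : i + rsub l i ≤ l.size := by
        by_cases hi1 : i ≤ l.size
        · exact rsub_bound l i h1 hi1
        · have := rsub_zero l i (by omega); omega
      simp only [rsub, if_pos hi] at h3
      have hj : j < l.size + 1 := by omega
      simp only [rsub, lsub, if_pos hi, if_pos hj]
      exact ihl i j h1 h2 (by omega)
    · by_cases heq : i = l.size + 1
      · simp only [rsub, lsub, if_neg hi, if_pos heq] at h3 ⊢
        have hj1 : ¬ j < l.size + 1 := by omega
        have hj2 : j ≠ l.size + 1 := by omega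
        simp only [if_neg hj1, if_neg hj2]
        have h4 : 1 ≤ j - (l.size + 1) := by omega
        have h5 : j - (l.size + 1) ≤ r.size := by omega
        have := rsub_bound r _ h4 h5
        have := lsub_lt r _ h4 h5
        omega
      · have hii : ¬ i < l.size + 1 := hi
        simp only [rsub, lsub, if_neg hii, if_neg heq] at h3 ⊢
        have hj1 : ¬ j < l.size + 1 := by omega
        have hj2 : j ≠ l.size + 1 := by omega
        simp only [if_neg hj1, if_neg hj2]
        have := ihr (i - (l.size + 1)) (j - (l.size + 1)) (by omega) (by omega) (by omega)
        omega

/-- laminarity, left version -/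
lemma nest_l (T : BinTree) : ∀ i j, j ≤ T.size → i < j → j - lsub T j ≤ i →
    j - lsub T j ≤ i - lsub T i ∧ i + rsub T i < j := by
  induction T with
  | leaf => intro i j h1 h2 h3; simp [BinTree.size] at h1; omega
  | node l r ihl ihr =>
    intro i j h1 h2 h3
    simp only [BinTree.size] at h1
    by_cases hj : j < l.size + 1
    · have hi : i < l.size + 1 := by omega
      simp only [rsub, lsub, if_pos hi, if_pos hj] at h3 ⊢
      exact ihl i j (by omega) h2 h3
    · by_cases heq : j = l.size + 1
      · simp only [lsub, if_neg hj, if_pos heq] at h3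
        -- j - l.size = 1 ≤ i, i < j so i ≤ l.size, i in left subtree
        have hi : i < l.size + 1 := by omega
        simp only [rsub, lsub, if_pos hi, if_neg hj, if_pos heq]
        by_cases hi1 : 1 ≤ i ∧ i ≤ l.size
        · have := rsub_bound l i hi1.1 hi1.2
          have := lsub_lt l i hi1.1 hi1.2
          omega
        · have h0 : i = 0 := by omega
          have := rsub_zero l i (by omega)
          have := lsub_zero l i (by omega)
          omega
      · simp only [lsub, rsub, if_neg hj, if_neg heq] at h3 ⊢
        have hjb : 1 ≤ j - (l.size + 1) := by omega
        have hjs : j - (l.size + 1) ≤ r.size := by omega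
        have hlj := lsub_lt r _ hjb hjs
        have hi : ¬ i < l.size + 1 := by omega
        have hieq : i ≠ l.size + 1 := by omega
        simp only [if_neg hi, if_neg hieq]
        have := ihr (i - (l.size + 1)) (j - (l.size + 1)) hjs (by omega) (by omega)
        omega

end IPAux
namespace IPAux
open BinTree

/-- nesting of subtree intervals -/
lemma interval_nest {T : BinTree} {a b : ℕ} (h : inSub T a b) :
    b - lsub T b ≤ a - lsub T a ∧ a + rsub T a ≤ b + rsub T b := by
  rw [inSub_iff] at h
  obtain ⟨h1, h2, h3, h4⟩ := h
  have hlb := lsub_lt T b h1 h2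
  have hrb := rsub_bound T b h1 h2
  rcases lt_trichotomy a b with hab | hab | hab
  · have := nest_l T a b h2 hab h3
    omega
  · subst hab; omega
  · have := nest_r T b a h1 hab h4
    have ha1 : 1 ≤ a := by omega
    have ha2 : a ≤ T.size := by omega
    have := lsub_lt T a ha1 ha2
    have := rsub_bound T a ha1 ha2
    omega

lemma inSub_trans {T : BinTree} {a b c : ℕ} (h1 : inSub T a b) (h2 : inSub T b c) :
    inSub T a c := by
  have hn1 := interval_nest h1
  have hn2 := interval_nest h2
  rw [inSub_iff] at h1 h2 ⊢
  obtain ⟨_, _, h13, h14⟩ := h1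
  obtain ⟨h21, h22, h23, h24⟩ := h2
  exact ⟨h21, h22, by omega, by omega⟩

lemma inSub_antisymm {T : BinTree} {a b : ℕ} (h1 : inSub T a b) (h2 : inSub T b a) :
    a = b := by
  have hb1 := inSub_bounds h1
  have hb2 := inSub_bounds h2
  rw [inSub_iff] at h1 h2
  rcases lt_trichotomy a b with hab | hab | hab
  · have := nest_l T a b hb1.2.2.2 hab h1.2.2.1
    omega
  · exact hab
  · have := nest_r T b a hb1.2.2.1 hab h1.2.2.2
    omega

lemma rot_size {U U' : BinTree} (h : Rot U U') : U'.size = U.size := by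
  induction h with
  | root A B C => simp [BinTree.size]; omega
  | left R _ ih => simp [BinTree.size]; omega
  | right L _ ih => simp [BinTree.size]; omega

lemma rot_sub {U U' : BinTree} (h : Rot U U') :
    ∀ i, rsub U i ≤ rsub U' i ∧ lsub U' i ≤ lsub U i := by
  induction h with
  | root A B C =>
    intro i
    have sz : (BinTree.node A B).size = A.size + B.size + 1 := rfl
    have sz2 : (BinTree.node B C).size = B.size + C.size + 1 := rfl
    simp only [rsub, lsub, sz, sz2]
    by_cases h1 : i < A.size + 1
    · have h2 : i < A.size + B.size + 1 + 1 := by omega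
      simp only [if_pos h1, if_pos h2]; simp
    · by_cases h2 : i = A.size + 1
      · have h3 : i < A.size + B.size + 1 + 1 := by omega
        have hb : i + rsub (BinTree.node A B) i ≤ A.size + B.size + 1 :=
          rsub_bound _ i (by omega) (by simp [BinTree.size]; omega)
        have hl : lsub (BinTree.node A B) i < i :=
          lsub_lt _ i (by omega) (by simp [BinTree.size]; omega)
        simp only [if_pos h3, if_neg h1, if_pos h2]
        constructor
        · simp only [rsub, sz, if_neg h1, if_pos h2] at hb ⊢; omega
        · simp only [lsub, sz, if_neg h1, if_pos h2] at hl ⊢; omega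
      · by_cases h3 : i < A.size + B.size + 1 + 1
        · -- i in B part
          simp only [if_pos h3, if_neg h1, if_neg h2]
          have h5 : i - (A.size + 1) < B.size + 1 := by omega
          simp only [rsub, lsub, sz, if_neg h1, if_neg h2, if_pos h5]
          exact ⟨le_refl _, le_refl _⟩
        · by_cases h4 : i = A.size + B.size + 1 + 1
          · have h5 : ¬ i - (A.size + 1) < B.size + 1 := by omega
            have h6 : i - (A.size + 1) = B.size + 1 := by omega
            simp only [if_neg h3, if_neg h1, if_neg h2, if_pos h4,
              rsub, lsub, if_neg h5, if_pos h6]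
            constructor
            · have : rsub C (i - (A.size + B.size + 1 + 1)) = rsub C 0 := by
                congr 1; omega
              simp [this, rsub_zero C 0 (Or.inl rfl)]
            · omega
          · have h5 : ¬ i - (A.size + 1) < B.size + 1 := by omega
            have h6 : ¬ i - (A.size + 1) = B.size + 1 := by omega
            have harith : i - (A.size + 1) - (B.size + 1) = i - (A.size + B.size + 1 + 1) := by
              omega
            simp only [if_neg h3, if_neg h1, if_neg h2, if_neg h4,
              rsub, lsub, if_neg h5, if_neg h6, harith, le_refl, and_self]
  | @left L L' R _ ih =>
    intro i
    have hsz : L'.size = L.size := rot_size (by assumption)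
    simp only [rsub, lsub, hsz]
    by_cases h1 : i < L.size + 1
    · simp only [if_pos h1]; exact ih i
    · by_cases h2 : i = L.size + 1 <;> simp [if_neg h1, h2, if_neg (by omega : ¬ i ≤ L.size)]
  | @right L R R' hr ih =>
    intro i
    have hsz : R'.size = R.size := rot_size hr
    simp only [rsub, lsub]
    by_cases h1 : i < L.size + 1
    · simp [if_pos h1, (by omega : i ≤ L.size)]
    · by_cases h2 : i = L.size + 1
      · simp [if_neg h1, h2, hsz]
      · simp only [if_neg h1, if_neg h2]; exact ih _

lemma tamari_size {T T' : BinTree} (h : TamariLE T T') : T'.size = T.size := by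
  induction h with
  | refl => rfl
  | tail _ h ih => rw [rot_size h, ih]

lemma tamari_sub {T T' : BinTree} (h : TamariLE T T') :
    ∀ i, rsub T i ≤ rsub T' i ∧ lsub T' i ≤ lsub T i := by
  induction h with
  | refl => intro i; exact ⟨le_refl _, le_refl _⟩
  | tail _ h ih =>
    intro i
    have := rot_sub h i
    have := ih i
    omega

end IPAux
namespace IPAux
open BinTree

lemma dec_iff (T : BinTree) (a b : ℕ) :
    decRel T a b ↔ (1 ≤ b ∧ b ≤ T.size ∧ b < a ∧ a ≤ b + rsub T b) := by
  unfold decRel bstRel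
  rw [inSub_iff]
  constructor
  · rintro ⟨h1, _, h⟩; exact ⟨h.1, h.2.1, h1, h.2.2.2⟩
  · rintro ⟨h1, h2, h3, h4⟩; exact ⟨h3, by omega, h1, h2, by omega, h4⟩

lemma inc_iff (T : BinTree) (a b : ℕ) :
    incRel T a b ↔ (b ≤ T.size ∧ a < b ∧ b - lsub T b ≤ a) := by
  unfold incRel bstRel
  rw [inSub_iff]
  constructor
  · rintro ⟨h1, _, h⟩; exact ⟨h.2.1, h1, h.2.2.1⟩
  · rintro ⟨h1, h2, h3⟩; exact ⟨h2, by omega, by omega, h1, h3, by omega⟩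

lemma dec_mono {T T' : BinTree} (h : TamariLE T T') {a b : ℕ} (hd : decRel T a b) :
    decRel T' a b := by
  rw [dec_iff] at hd ⊢
  have := tamari_sub h b
  have := tamari_size h
  omega

lemma inc_mono {T T' : BinTree} (h : TamariLE T T') {a b : ℕ} (hi : incRel T' a b) :
    incRel T a b := by
  rw [inc_iff] at hi ⊢
  have h1 := tamari_sub h b
  have h2 := tamari_size h
  have hb1 : 1 ≤ b := by omega
  rcases le_or_gt b T.size with hb | hb
  · have := lsub_lt T b hb1 hb
    omega
  · have := lsub_zero T' b (by omega)
    omega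

lemma mixed_trans {T T' : BinTree} (ht : TamariLE T T') {a b c : ℕ}
    (h1 : IPrel T T' a b) (h2 : IPrel T T' b c) : IPrel T T' a c := by
  have hsub1 : inSub T a b ∧ inSub T' a b := by
    rcases h1 with h | h
    · exact ⟨h.2.2, (dec_mono ht h).2.2⟩
    · exact ⟨(inc_mono ht h).2.2, h.2.2⟩
  have hsub2 : inSub T b c ∧ inSub T' b c := by
    rcases h2 with h | h
    · exact ⟨h.2.2, (dec_mono ht h).2.2⟩
    · exact ⟨(inc_mono ht h).2.2, h.2.2⟩
  have hT : inSub T a c := inSub_trans hsub1.1 hsub2.1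
  have hT' : inSub T' a c := inSub_trans hsub1.2 hsub2.2
  have hab : a ≠ b := by
    rcases h1 with h | h
    · have := h.1; omega
    · have := h.1; omega
  have hac : a ≠ c := by
    intro he
    subst he
    exact hab (inSub_antisymm hsub1.1 hsub2.1)
  rcases lt_or_gt_of_ne hac with h | h
  · exact Or.inr ⟨h, hac, hT'⟩
  · exact Or.inl ⟨h, hac, hT⟩

lemma isIntervalPoset_of {n : ℕ} {T T' : BinTree} (hs : T.size = n) (hs' : T'.size = n)
    (ht : TamariLE T T') : IsIntervalPoset n (IPrel T T') := by
  refine ⟨?_, ?_, ?_, ?_, ?_⟩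
  · intro a b h
    rcases h with h | h
    · have := inSub_bounds h.2.2; omega
    · have := inSub_bounds h.2.2; omega
  · intro a h
    rcases h with h | h <;> exact absurd h.1 (lt_irrefl a)
  · intro a b c h1 h2; exact mixed_trans ht h1 h2
  · -- a < b < c, rel a c → rel b c  (must be inc)
    intro a b c hab hbc h
    rcases h with h | h
    · exact absurd h.1 (by omega)
    · refine Or.inr ?_
      rw [inc_iff] at h ⊢
      omega
  · intro a b c hab hbc h
    rcases h with h | h
    · refine Or.inl ?_
      rw [dec_iff] at h ⊢
      omega
    · exact absurd h.1 (by omega)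

end IPAux
namespace IPAux
open BinTree

/-- build the unique binary tree whose right-subtree-size vector is `v` -/
noncomputable def build : ℕ → (ℕ → ℕ) → BinTree
  | 0, _ => .leaf
  | (n+1), v =>
    let m := sInf {i | 0 < i ∧ i + v i = n + 1}
    if h : 0 < m ∧ m ≤ n + 1 then
      .node (build (m - 1) v) (build (n + 1 - m) (fun j => v (j + m)))
    else .leaf
  decreasing_by
  · omega
  · omega

/-- validity of a right-subtree-size vector -/
def ValidR (n : ℕ) (v : ℕ → ℕ) : Prop :=
  ∀ i, 1 ≤ i → i ≤ n → i + v i ≤ n ∧ ∀ j, i < j → j ≤ i + v i → j + v j ≤ i + v i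

lemma build_spec : ∀ n v, ValidR n v →
    (build n v).size = n ∧ ∀ i, 1 ≤ i → i ≤ n → rsub (build n v) i = v i := by
  intro n
  induction n using Nat.strong_induction_on with
  | _ n ih =>
    match n with
    | 0 => intro v _; exact ⟨by simp [build, BinTree.size], by omega⟩
    | (n+1) =>
      intro v hv
      have hvtop : (n+1) + v (n+1) ≤ n + 1 := (hv (n+1) (by omega) (by omega)).1
      have hne : {i | 0 < i ∧ i + v i = n + 1}.Nonempty := ⟨n+1, by omega, by omega⟩
      set m := sInf {i | 0 < i ∧ i + v i = n + 1} with hm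
      have hspec : 0 < m ∧ m + v m = n + 1 := Nat.sInf_mem hne
      have hmin : ∀ k, k < m → ¬ (0 < k ∧ k + v k = n + 1) := by
        intro k hk hcon
        exact Nat.notMem_of_lt_sInf hk hcon
      have hmn : m ≤ n + 1 := by omega
      have hcond : 0 < m ∧ m ≤ n + 1 := ⟨hspec.1, hmn⟩
      -- left vector validity
      have hvl : ValidR (m - 1) v := by
        intro i h1 h2
        have hbi := hv i h1 (by omega)
        have hbi1 := hbi.1
        constructor
        · by_contra hcon
          push_neg at hcon
          have h3 : m ≤ i + v i := by omega
          have h4 : m + v m ≤ i + v i := hbi.2 m (by omega) h3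
          exact hmin i (by omega) ⟨by omega, by omega⟩
        · intro j hj1 hj2; exact hbi.2 j hj1 hj2
      have hvr : ValidR (n + 1 - m) (fun j => v (j + m)) := by
        intro i h1 h2
        have hbi := hv (i + m) (by omega) (by omega)
        have hbi1 := hbi.1
        refine ⟨?_, ?_⟩
        · show i + v (i + m) ≤ n + 1 - m
          omega
        · intro j hj1 hj2
          show j + v (j + m) ≤ i + v (i + m)
          have hj2' : j ≤ i + v (i + m) := hj2
          have := hbi.2 (j + m) (by omega) (by omega)
          omega
      have ihl := ih (m-1) (by omega) v hvl
      have ihr := ih (n+1-m) (by omega) (fun j => v (j + m)) hvr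
      rw [build]
      simp only [← hm]
      rw [dif_pos hcond]
      constructor
      · simp only [BinTree.size, ihl.1, ihr.1]; omega
      · intro i h1 h2
        simp only [rsub, ihl.1]
        by_cases hi : i < (m - 1) + 1
        · rw [if_pos hi]
          exact (ihl.2 i h1 (by omega))
        · by_cases hieq : i = (m-1) + 1
          · rw [if_neg hi, if_pos hieq, ihr.1]
            have him : i = m := by omega
            rw [him]
            omega
          · rw [if_neg hi, if_neg hieq]
            have h3 : 1 ≤ i - ((m-1)+1) := by omega
            have h4 : rsub (build (n+1-m) (fun j => v (j + m))) (i - ((m-1)+1))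
                = v ((i - ((m-1)+1)) + m) := ihr.2 (i - ((m-1)+1)) h3 (by omega)
            rw [h4]
            congr 1
            omega

lemma rsub_inj : ∀ S S' : BinTree, S.size = S'.size → (∀ i, rsub S i = rsub S' i) →
    S = S' := by
  intro S
  induction S with
  | leaf =>
    intro S' hs _
    cases S' with
    | leaf => rfl
    | node l r => simp [BinTree.size] at hs
  | node l r ihl ihr =>
    intro S' hs hv
    cases S' with
    | leaf => simp [BinTree.size] at hs
    | node l' r' =>
      simp only [BinTree.size] at hs
      have hp : l.size = l'.size := by
        by_contra hne
        rcases lt_or_gt_of_ne hne with hlt | hgt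
        · -- l.size + 1 ≤ l'.size : index l.size+1 lies in l'
          have e := hv (l.size + 1)
          have e1 : rsub (BinTree.node l r) (l.size+1) = r.size := by
            simp [rsub]
          have e2 : rsub (BinTree.node l' r') (l.size+1) = rsub l' (l.size+1) := by
            simp only [rsub, if_pos (by omega : l.size + 1 < l'.size + 1)]
          have := rsub_bound l' (l.size+1) (by omega) (by omega)
          omega
        · have e := hv (l'.size + 1)
          have e1 : rsub (BinTree.node l' r') (l'.size+1) = r'.size := by
            simp [rsub]
          have e2 : rsub (BinTree.node l r) (l'.size+1) = rsub l (l'.size+1) := by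
            simp only [rsub, if_pos (by omega : l'.size + 1 < l.size + 1)]
          have := rsub_bound l (l'.size+1) (by omega) (by omega)
          omega
      have hl : l = l' := by
        apply ihl _ hp
        intro i
        by_cases hi : 1 ≤ i ∧ i ≤ l.size
        · have e := hv i
          simp only [rsub, if_pos (by omega : i < l.size + 1), hp,
            if_pos (by omega : i < l'.size + 1)] at e
          simpa [rsub, if_pos (show i < l.size + 1 by omega)] using e
        · rw [rsub_zero l i (by omega), rsub_zero l' i (by omega)]
      have hr : r = r' := by
        apply ihr _ (by omega)
        intro i
        by_cases hi : 1 ≤ i ∧ i ≤ r.size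
        · have e := hv (i + l.size + 1)
          simp only [rsub, if_neg (by omega : ¬ i + l.size + 1 < l.size + 1),
            if_neg (by omega : ¬ i + l.size + 1 = l.size + 1), ← hp,
            if_neg (by omega : ¬ i + l.size + 1 < l.size + 1)] at e
          have harith : i + l.size + 1 - (l.size + 1) = i := by omega
          rw [harith] at e
          exact e
        · rw [rsub_zero r i (by omega), rsub_zero r' i (by omega)]
      rw [hl, hr]

end IPAux
namespace IPAux
open BinTree

lemma rsub_node_lt {l r : BinTree} {i : ℕ} (h : i < l.size + 1) :
    rsub (BinTree.node l r) i = rsub l i := by simp [rsub, if_pos h, (by omega : i ≤ l.size)]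

lemma rsub_node_eq {l r : BinTree} {i : ℕ} (h : i = l.size + 1) :
    rsub (BinTree.node l r) i = r.size := by simp [rsub, h]

lemma rsub_node_gt {l r : BinTree} {i : ℕ} (h : l.size + 1 < i) :
    rsub (BinTree.node l r) i = rsub r (i - (l.size + 1)) := by
  simp only [rsub, if_neg (by omega : ¬ i < l.size + 1), if_neg (by omega : i ≠ l.size + 1)]

lemma lsub_node_lt {l r : BinTree} {i : ℕ} (h : i < l.size + 1) :
    lsub (BinTree.node l r) i = lsub l i := by simp [lsub, if_pos h, (by omega : i ≤ l.size)]

lemma lsub_node_eq {l r : BinTree} {i : ℕ} (h : i = l.size + 1) :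
    lsub (BinTree.node l r) i = l.size := by simp [lsub, h]

lemma lsub_node_gt {l r : BinTree} {i : ℕ} (h : l.size + 1 < i) :
    lsub (BinTree.node l r) i = lsub r (i - (l.size + 1)) := by
  simp only [lsub, if_neg (by omega : ¬ i < l.size + 1), if_neg (by omega : i ≠ l.size + 1)]

lemma rot_exists : ∀ S : BinTree, ∀ i, 1 ≤ i → i + rsub S i < S.size →
    (∃ p, 1 ≤ p ∧ p < i ∧ p + rsub S p = i + rsub S i) ∨
    (∃ S', Rot S S' ∧ (∀ k, k ≠ i → rsub S' k = rsub S k) ∧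
      rsub S' i = rsub S i + 1 + rsub S (i + rsub S i + 1)) := by
  intro S
  induction S with
  | leaf => intro i h1 h2; simp [BinTree.size] at h2
  | node l r ihl ihr =>
    intro i h1 h2
    have hsz : (BinTree.node l r).size = l.size + r.size + 1 := rfl
    rcases lt_trichotomy i (l.size + 1) with hi | hi | hi
    · -- i in left subtree
      have hri : rsub (BinTree.node l r) i = rsub l i := rsub_node_lt hi
      have hbl : i + rsub l i ≤ l.size := rsub_bound l i h1 (by omega)
      rcases eq_or_lt_of_le hbl with hc2 | hc
      · -- i is on the right spine of l
        cases l with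
        | leaf => simp [BinTree.size] at hi; omega
        | node A B =>
          have hszl : (BinTree.node A B).size = A.size + B.size + 1 := rfl
          rcases eq_or_ne i (A.size + 1) with hiA | hiA
          · -- rotate at the root of l
            have hszBr : (BinTree.node B r).size = B.size + r.size + 1 := rfl
            refine Or.inr ⟨BinTree.node A (BinTree.node B r), Rot.root A B r, ?_, ?_⟩
            · intro k hk
              rcases lt_trichotomy k (A.size + 1) with h' | h' | h'
              · have eL : rsub (BinTree.node A (BinTree.node B r)) k = rsub A k :=
                  rsub_node_lt h'
                have eR1 : rsub (BinTree.node (BinTree.node A B) r) k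
                    = rsub (BinTree.node A B) k := rsub_node_lt (by rw [hszl]; omega)
                have eR2 : rsub (BinTree.node A B) k = rsub A k := rsub_node_lt h'
                rw [eL, eR1, eR2]
              · omega
              · rcases lt_trichotomy k (A.size + B.size + 2) with h'' | h'' | h''
                · have eL1 : rsub (BinTree.node A (BinTree.node B r)) k
                      = rsub (BinTree.node B r) (k - (A.size+1)) := rsub_node_gt h'
                  have eL2 : rsub (BinTree.node B r) (k - (A.size+1))
                      = rsub B (k - (A.size+1)) := rsub_node_lt (by omega)
                  have eR1 : rsub (BinTree.node (BinTree.node A B) r) k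
                      = rsub (BinTree.node A B) k := rsub_node_lt (by rw [hszl]; omega)
                  have eR2 : rsub (BinTree.node A B) k = rsub B (k - (A.size+1)) :=
                    rsub_node_gt h'
                  rw [eL1, eL2, eR1, eR2]
                · have eL1 : rsub (BinTree.node A (BinTree.node B r)) k
                      = rsub (BinTree.node B r) (k - (A.size+1)) := rsub_node_gt h'
                  have eL2 : rsub (BinTree.node B r) (k - (A.size+1)) = r.size :=
                    rsub_node_eq (by omega)
                  have eR : rsub (BinTree.node (BinTree.node A B) r) k = r.size :=
                    rsub_node_eq (by rw [hszl]; omega)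
                  rw [eL1, eL2, eR]
                · have eL1 : rsub (BinTree.node A (BinTree.node B r)) k
                      = rsub (BinTree.node B r) (k - (A.size+1)) := rsub_node_gt h'
                  have eL2 : rsub (BinTree.node B r) (k - (A.size+1))
                      = rsub r (k - (A.size+1) - (B.size+1)) := rsub_node_gt (by omega)
                  have eR : rsub (BinTree.node (BinTree.node A B) r) k
                      = rsub r (k - ((BinTree.node A B).size + 1)) := rsub_node_gt (by rw [hszl]; omega)
                  rw [eL1, eL2, eR, hszl]
                  congr 1
                  omega
            · have e1 : rsub (BinTree.node A (BinTree.node B r)) i = B.size + r.size + 1 := by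
                rw [rsub_node_eq hiA, hszBr]
              have e2 : rsub (BinTree.node (BinTree.node A B) r) i = B.size := by
                rw [rsub_node_lt hi, hiA, rsub_node_eq rfl]
              have e3 : rsub (BinTree.node (BinTree.node A B) r) (i + B.size + 1) = r.size :=
                rsub_node_eq (by rw [hszl]; omega)
              rw [e1, e2, e3]
              omega
          · -- the root of l is a smaller index with the same reach
            have hAlt : A.size + 1 < i := by
              rcases lt_or_gt_of_ne hiA with h' | h'
              · exfalso
                have e : rsub (BinTree.node A B) i = rsub A i := rsub_node_lt h'
                have hbd : i + rsub A i ≤ A.size := rsub_bound A i h1 (by omega)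
                rw [e, hszl] at hc2
                omega
              · exact h'
            refine Or.inl ⟨A.size + 1, by omega, hAlt, ?_⟩
            have e1 : rsub (BinTree.node (BinTree.node A B) r) (A.size + 1)
                = rsub (BinTree.node A B) (A.size+1) := rsub_node_lt (by rw [hszl]; omega)
            have e2 : rsub (BinTree.node A B) (A.size + 1) = B.size := rsub_node_eq rfl
            rw [e1, e2, hri]
            rw [hszl] at hc2
            omega
      · -- strict: recurse into l
        rcases ihl i h1 hc with ⟨p, hp1, hp2, hp3⟩ | ⟨l', hrot, hk, hi'⟩
        · refine Or.inl ⟨p, hp1, hp2, ?_⟩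
          rw [rsub_node_lt (by omega), hri]
          exact hp3
        · have hszl' : l'.size = l.size := rot_size hrot
          refine Or.inr ⟨BinTree.node l' r, Rot.left r hrot, ?_, ?_⟩
          · intro k hk'
            rcases lt_trichotomy k (l.size + 1) with h' | h' | h'
            · rw [rsub_node_lt (by omega), rsub_node_lt h']
              exact hk k hk'
            · rw [rsub_node_eq (show k = l'.size + 1 by omega), rsub_node_eq h']
            · rw [rsub_node_gt (show l'.size + 1 < k by omega), rsub_node_gt h', hszl']
          · have e1 : rsub (BinTree.node l' r) i = rsub l' i := rsub_node_lt (by omega)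
            have e2 : rsub (BinTree.node l r) (i + rsub (BinTree.node l r) i + 1)
                = rsub l (i + rsub l i + 1) := by
              rw [hri]
              exact rsub_node_lt (by omega)
            rw [e1, e2, hri, hi']
    · -- i is the root: impossible
      exfalso
      have : rsub (BinTree.node l r) i = r.size := rsub_node_eq hi
      rw [this, hsz] at h2
      omega
    · -- i in right subtree
      have hri : rsub (BinTree.node l r) i = rsub r (i - (l.size + 1)) := rsub_node_gt hi
      set i' := i - (l.size + 1) with hi'def
      have hi'1 : 1 ≤ i' := by omega
      have hi'le : i' ≤ r.size := by
        by_contra hcon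
        have := rsub_zero r i' (by omega)
        rw [hri, this] at h2
        rw [hsz] at h2
        omega
      have hlt : i' + rsub r i' < r.size := by
        rw [hri, hsz] at h2
        omega
      rcases ihr i' hi'1 hlt with ⟨p, hp1, hp2, hp3⟩ | ⟨r', hrot, hk, hir⟩
      · refine Or.inl ⟨p + (l.size + 1), by omega, by omega, ?_⟩
        rw [rsub_node_gt (by omega : l.size + 1 < p + (l.size+1)), hri]
        have : p + (l.size + 1) - (l.size + 1) = p := by omega
        rw [this]
        omega
      · have hszr' : r'.size = r.size := rot_size hrot
        refine Or.inr ⟨BinTree.node l r', Rot.right l hrot, ?_, ?_⟩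
        · intro k hk'
          rcases lt_trichotomy k (l.size + 1) with h' | h' | h'
          · rw [rsub_node_lt h', rsub_node_lt h']
          · rw [rsub_node_eq h', rsub_node_eq h', hszr']
          · rw [rsub_node_gt h', rsub_node_gt h']
            exact hk (k - (l.size + 1)) (by omega)
        · have e1 : rsub (BinTree.node l r') i = rsub r' i' := rsub_node_gt hi
          have e2 : rsub (BinTree.node l r) (i + rsub (BinTree.node l r) i + 1)
              = rsub r (i' + rsub r i' + 1) := by
            rw [hri, rsub_node_gt (by omega : l.size + 1 < i + rsub r i' + 1)]
            congr 1
            omega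
          rw [e1, e2, hri, hir]

end IPAux
namespace IPAux
open BinTree

lemma tamari_of_le_aux : ∀ N : ℕ, ∀ S S' : BinTree, S.size = S'.size →
    (∀ k, rsub S k ≤ rsub S' k) →
    (∑ k ∈ Finset.Icc 1 S.size, (rsub S' k - rsub S k)) ≤ N → TamariLE S S' := by
  intro N
  induction N with
  | zero =>
    intro S S' hsz hle hsum
    have heq : ∀ k, rsub S k = rsub S' k := by
      intro k
      by_cases hk : 1 ≤ k ∧ k ≤ S.size
      · have hmem : k ∈ Finset.Icc 1 S.size := by
          simp only [Finset.mem_Icc]; omega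
        have := Finset.sum_eq_zero_iff.mp (Nat.le_zero.mp hsum) k hmem
        have := hle k
        omega
      · rw [rsub_zero S k (by omega), rsub_zero S' k (by omega)]
    rw [rsub_inj S S' hsz heq]
    exact Relation.ReflTransGen.refl
  | succ N ih =>
    intro S S' hsz hle hsum
    by_cases heq : ∀ k, rsub S k = rsub S' k
    · rw [rsub_inj S S' hsz heq]
      exact Relation.ReflTransGen.refl
    · push_neg at heq
      obtain ⟨k₀, hk₀⟩ := heq
      have hex : ∃ k, rsub S k < rsub S' k := ⟨k₀, lt_of_le_of_ne (hle k₀) hk₀⟩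
      classical
      set i := Nat.find hex with hi
      have hidef : rsub S i < rsub S' i := Nat.find_spec hex
      have himin : ∀ k, k < i → ¬ rsub S k < rsub S' k := fun k hk => Nat.find_min hex hk
      have hi1 : 1 ≤ i := by
        rcases Nat.eq_zero_or_pos i with h0 | h0
        · rw [h0] at hidef
          rw [rsub_zero S 0 (by omega), rsub_zero S' 0 (by omega)] at hidef
          omega
        · exact h0
      have hin : i ≤ S.size := by
        by_contra hcon
        rw [rsub_zero S i (by omega), rsub_zero S' i (by omega)] at hidef
        omega
      have hbnd : i + rsub S' i ≤ S.size := by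
        rw [hsz]
        exact rsub_bound S' i hi1 (by omega)
      have hlt : i + rsub S i < S.size := by omega
      rcases rot_exists S i hi1 hlt with ⟨p, hp1, hp2, hp3⟩ | ⟨S₂, hrot, hk, hival⟩
      · exfalso
        have hple : rsub S p ≤ rsub S' p := hle p
        have hpeq : rsub S p = rsub S' p := by
          have := himin p hp2
          omega
        -- nesting of S' at (p, i) gives a contradiction
        have := nest_r S' p i hp1 hp2 (by omega)
        omega
      · -- step: Rot S S₂, still below S'
        set j := i + rsub S i + 1 with hj
        have hjle : j ≤ i + rsub S' i := by omega
        have hnest := nest_r S' i j hi1 (by omega) (by omega)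
        have hle2 : ∀ k, rsub S₂ k ≤ rsub S' k := by
          intro k
          rcases eq_or_ne k i with he | hne
          · rw [he, hival]
            have := hle j
            omega
          · rw [hk k hne]
            exact hle k
        have hsz2 : S₂.size = S'.size := by rw [rot_size hrot, hsz]
        have hsum2 : (∑ k ∈ Finset.Icc 1 S₂.size, (rsub S' k - rsub S₂ k)) ≤ N := by
          have hszeq : S₂.size = S.size := rot_size hrot
          rw [hszeq]
          have hstrict : (∑ k ∈ Finset.Icc 1 S.size, (rsub S' k - rsub S₂ k))
              < ∑ k ∈ Finset.Icc 1 S.size, (rsub S' k - rsub S k) := by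
            apply Finset.sum_lt_sum
            · intro k _
              rcases eq_or_ne k i with he | hne
              · rw [he, hival]; omega
              · rw [hk k hne]
            · refine ⟨i, by simp only [Finset.mem_Icc]; omega, ?_⟩
              rw [hival]
              have := hle2 i
              rw [hival] at this
              omega
          omega
        exact Relation.ReflTransGen.head hrot (ih S₂ S' hsz2 hle2 hsum2)

lemma tamari_of_le {S S' : BinTree} (hsz : S.size = S'.size)
    (hle : ∀ k, rsub S k ≤ rsub S' k) : TamariLE S S' :=
  tamari_of_le_aux _ S S' hsz hle (le_refl _)

end IPAux
namespace IPAux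
open BinTree

def mirror : BinTree → BinTree
  | .leaf => .leaf
  | .node l r => .node (mirror r) (mirror l)

lemma mirror_size : ∀ T : BinTree, (mirror T).size = T.size := by
  intro T
  induction T with
  | leaf => rfl
  | node l r ihl ihr => simp [mirror, BinTree.size, ihl, ihr]; omega

lemma mirror_sub : ∀ T : BinTree, ∀ i, 1 ≤ i → i ≤ T.size →
    lsub (mirror T) i = rsub T (T.size + 1 - i) ∧
    rsub (mirror T) i = lsub T (T.size + 1 - i) := by
  intro T
  induction T with
  | leaf => intro i h1 h2; simp [BinTree.size] at h2; omega
  | node l r ihl ihr =>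
    intro i h1 h2
    have hsz : (BinTree.node l r).size = l.size + r.size + 1 := rfl
    have hszm : (mirror r).size = r.size := mirror_size r
    have hszml : (mirror l).size = l.size := mirror_size l
    rw [hsz] at h2
    show lsub (BinTree.node (mirror r) (mirror l)) i = _ ∧
      rsub (BinTree.node (mirror r) (mirror l)) i = _
    rcases lt_trichotomy i (r.size + 1) with hi | hi | hi
    · have e1 : lsub (BinTree.node (mirror r) (mirror l)) i = lsub (mirror r) i :=
        lsub_node_lt (by omega)
      have e2 : rsub (BinTree.node (mirror r) (mirror l)) i = rsub (mirror r) i :=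
        rsub_node_lt (by omega)
      have ihr' := ihr i h1 (by omega)
      have hgt : l.size + 1 < (BinTree.node l r).size + 1 - i := by rw [hsz]; omega
      have e3 : rsub (BinTree.node l r) ((BinTree.node l r).size + 1 - i)
          = rsub r ((BinTree.node l r).size + 1 - i - (l.size + 1)) := rsub_node_gt hgt
      have e4 : lsub (BinTree.node l r) ((BinTree.node l r).size + 1 - i)
          = lsub r ((BinTree.node l r).size + 1 - i - (l.size + 1)) := lsub_node_gt hgt
      have harith : (BinTree.node l r).size + 1 - i - (l.size + 1) = r.size + 1 - i := by
        rw [hsz]; omega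
      rw [e1, e2, e3, e4, harith, ihr'.1, ihr'.2]
      exact ⟨rfl, rfl⟩
    · have e1 : lsub (BinTree.node (mirror r) (mirror l)) i = (mirror r).size :=
        lsub_node_eq (by omega)
      have e2 : rsub (BinTree.node (mirror r) (mirror l)) i = (mirror l).size :=
        rsub_node_eq (by omega)
      have harith : (BinTree.node l r).size + 1 - i = l.size + 1 := by rw [hsz]; omega
      rw [e1, e2, harith, rsub_node_eq rfl, lsub_node_eq rfl, hszm, hszml]
      exact ⟨rfl, rfl⟩
    · have e1 : lsub (BinTree.node (mirror r) (mirror l)) i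
          = lsub (mirror l) (i - (r.size + 1)) := by
        have := lsub_node_gt (l := mirror r) (r := mirror l) (i := i) (by omega)
        rwa [hszm] at this
      have e2 : rsub (BinTree.node (mirror r) (mirror l)) i
          = rsub (mirror l) (i - (r.size + 1)) := by
        have := rsub_node_gt (l := mirror r) (r := mirror l) (i := i) (by omega)
        rwa [hszm] at this
      have ihl' := ihl (i - (r.size + 1)) (by omega) (by omega)
      have hlt : (BinTree.node l r).size + 1 - i < l.size + 1 := by rw [hsz]; omega
      have e3 : rsub (BinTree.node l r) ((BinTree.node l r).size + 1 - i)
          = rsub l ((BinTree.node l r).size + 1 - i) := rsub_node_lt hlt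
      have e4 : lsub (BinTree.node l r) ((BinTree.node l r).size + 1 - i)
          = lsub l ((BinTree.node l r).size + 1 - i) := lsub_node_lt hlt
      have harith : l.size + 1 - (i - (r.size + 1)) = (BinTree.node l r).size + 1 - i := by
        rw [hsz]; omega
      rw [e1, e2, e3, e4, ihl'.1, ihl'.2, harith]
      exact ⟨rfl, rfl⟩

/-- validity of a left-subtree-size vector -/
def ValidL (n : ℕ) (g : ℕ → ℕ) : Prop :=
  ∀ i, 1 ≤ i → i ≤ n → g i < i ∧
    ∀ j, j ≤ n → i < j → j - g j ≤ i → j - g j ≤ i - g i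

noncomputable def buildL (n : ℕ) (g : ℕ → ℕ) : BinTree :=
  mirror (build n (fun i => g (n + 1 - i)))

lemma buildL_spec (n : ℕ) (g : ℕ → ℕ) (hg : ValidL n g) :
    (buildL n g).size = n ∧ ∀ i, 1 ≤ i → i ≤ n → lsub (buildL n g) i = g i := by
  have hv : ValidR n (fun i => g (n + 1 - i)) := by
    intro i h1 h2
    have hb := (hg (n + 1 - i) (by omega) (by omega)).1
    refine ⟨?_, ?_⟩
    · show i + g (n + 1 - i) ≤ n
      omega
    · intro j hj1 hj2
      show j + g (n + 1 - j) ≤ i + g (n + 1 - i)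
      have hj2' : j ≤ i + g (n + 1 - i) := hj2
      have hjn : j ≤ n := by omega
      have hb2 := (hg (n + 1 - j) (by omega) (by omega)).1
      have hnest := (hg (n + 1 - j) (by omega) (by omega)).2 (n + 1 - i) (by omega)
        (by omega) (by omega)
      omega
  have hb := build_spec n (fun i => g (n + 1 - i)) hv
  constructor
  · rw [buildL, mirror_size, hb.1]
  · intro i h1 h2
    have hm := (mirror_sub (build n (fun i => g (n + 1 - i))) i (by rw [hb.1] at *; omega)
      (by rw [hb.1]; omega)).1
    rw [buildL, hm, hb.1]
    have := hb.2 (n + 1 - i) (by omega) (by omega)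
    rw [this]
    show g (n + 1 - (n + 1 - i)) = g i
    congr 1
    omega

/-- the node just after the subtree of `b` has `b`'s subtree inside its left subtree -/
lemma adjacency : ∀ T : BinTree, ∀ b, 1 ≤ b → b ≤ T.size → b + rsub T b < T.size →
    (b + rsub T b + 1) - lsub T (b + rsub T b + 1) ≤ b := by
  intro T
  induction T with
  | leaf => intro b h1 h2 h3; simp [BinTree.size] at h2; omega
  | node l r ihl ihr =>
    intro b h1 h2 h3
    have hsz : (BinTree.node l r).size = l.size + r.size + 1 := rfl
    rw [hsz] at h2 h3
    rcases lt_trichotomy b (l.size + 1) with hb | hb | hb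
    · have e1 : rsub (BinTree.node l r) b = rsub l b := rsub_node_lt hb
      have hbd : b + rsub l b ≤ l.size := rsub_bound l b h1 (by omega)
      rcases eq_or_lt_of_le hbd with he | hlt
      · have e2 : lsub (BinTree.node l r) (b + rsub l b + 1) = l.size :=
          lsub_node_eq (by omega)
        rw [e1, e2]
        omega
      · have e2 : lsub (BinTree.node l r) (b + rsub l b + 1) = lsub l (b + rsub l b + 1) :=
          lsub_node_lt (by omega)
        rw [e1, e2]
        exact ihl b h1 (by omega) hlt
    · exfalso
      have e1 : rsub (BinTree.node l r) b = r.size := rsub_node_eq hb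
      rw [e1] at h3
      omega
    · have e1 : rsub (BinTree.node l r) b = rsub r (b - (l.size + 1)) := rsub_node_gt hb
      set b' := b - (l.size + 1) with hb'
      have hb'1 : 1 ≤ b' := by omega
      have hb'2 : b' ≤ r.size := by omega
      have hlt : b' + rsub r b' < r.size := by rw [e1] at h3; omega
      have ih := ihr b' hb'1 hb'2 hlt
      have e2 : lsub (BinTree.node l r) (b + rsub r b' + 1)
          = lsub r (b + rsub r b' + 1 - (l.size + 1)) := lsub_node_gt (by omega)
      have harith : b + rsub r b' + 1 - (l.size + 1) = b' + rsub r b' + 1 := by omega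
      rw [e1, e2, harith]
      omega

end IPAux
namespace IPAux
open BinTree

lemma card_interval_up (S : Finset ℕ) (b : ℕ) (hS : ∀ x ∈ S, b < x)
    (hcl : ∀ x ∈ S, ∀ y, b < y → y < x → y ∈ S) :
    ∀ x, x ∈ S ↔ (b < x ∧ x ≤ b + S.card) := by
  intro x
  constructor
  · intro hx
    refine ⟨hS x hx, ?_⟩
    have hsub : Finset.Ioc b x ⊆ S := by
      intro y hy
      simp only [Finset.mem_Ioc] at hy
      rcases eq_or_lt_of_le hy.2 with he | hlt
      · rwa [he]
      · exact hcl x hx y hy.1 hlt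
    have := Finset.card_le_card hsub
    rw [Nat.card_Ioc] at this
    have := hS x hx
    omega
  · rintro ⟨h1, h2⟩
    by_contra hx
    have hsub : S ⊆ Finset.Ioo b x := by
      intro z hz
      simp only [Finset.mem_Ioo]
      refine ⟨hS z hz, ?_⟩
      rcases lt_trichotomy z x with h | h | h
      · exact h
      · exact absurd (h ▸ hz) hx
      · exact absurd (hcl z hz x h1 h) hx
    have := Finset.card_le_card hsub
    rw [Nat.card_Ioo] at this
    omega

lemma card_interval_down (S : Finset ℕ) (b : ℕ) (hS : ∀ x ∈ S, x < b)
    (hcl : ∀ x ∈ S, ∀ y, x < y → y < b → y ∈ S) :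
    ∀ x, x ∈ S ↔ (b - S.card ≤ x ∧ x < b) := by
  intro x
  constructor
  · intro hx
    refine ⟨?_, hS x hx⟩
    have hsub : Finset.Ico x b ⊆ S := by
      intro y hy
      simp only [Finset.mem_Ico] at hy
      rcases eq_or_lt_of_le hy.1 with he | hlt
      · rwa [← he]
      · exact hcl x hx y hlt hy.2
    have := Finset.card_le_card hsub
    rw [Nat.card_Ico] at this
    omega
  · rintro ⟨h1, h2⟩
    by_contra hx
    have hsub : S ⊆ Finset.Ioo x b := by
      intro z hz
      simp only [Finset.mem_Ioo]
      refine ⟨?_, hS z hz⟩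
      rcases lt_trichotomy x z with h | h | h
      · exact h
      · exact absurd (h ▸ hz) hx
      · exact absurd (hcl z hz x h h2) hx
    have := Finset.card_le_card hsub
    rw [Nat.card_Ioo] at this
    omega

lemma exists_trees {n : ℕ} {rel : ℕ → ℕ → Prop} (h : IsIntervalPoset n rel) :
    ∃ T T' : BinTree, T.size = n ∧ T'.size = n ∧ TamariLE T T' ∧
      ∀ a b, rel a b ↔ IPrel T T' a b := by
  classical
  obtain ⟨hbnd, hirr, htrans, hup, hdn⟩ := h
  set f : ℕ → ℕ := fun b => ((Finset.Icc 1 n).filter (fun x => b < x ∧ rel x b)).card with hfdef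
  set g : ℕ → ℕ := fun b => ((Finset.Icc 1 n).filter (fun x => x < b ∧ rel x b)).card with hgdef
  -- the decreasing relations to b form the interval (b, b + f b]
  have hf : ∀ b a, (b < a ∧ rel a b) ↔ (b < a ∧ a ≤ b + f b) := by
    intro b a
    have hiff := card_interval_up ((Finset.Icc 1 n).filter (fun x => b < x ∧ rel x b)) b
      (by intro x hx; simp only [Finset.mem_filter] at hx; exact hx.2.1)
      (by
        intro x hx y hy1 hy2
        simp only [Finset.mem_filter, Finset.mem_Icc] at hx ⊢
        exact ⟨⟨by omega, by omega⟩, hy1, hdn b y x hy1 hy2 hx.2.2⟩)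
      a
    simp only [Finset.mem_filter, Finset.mem_Icc] at hiff
    constructor
    · intro ha
      have hb := hbnd a b ha.2
      exact hiff.mp ⟨⟨by omega, by omega⟩, ha.1, ha.2⟩
    · intro ha
      have := hiff.mpr ⟨ha.1, ha.2⟩
      exact ⟨ha.1, this.2.2⟩
  -- the increasing relations to b form the interval [b - g b, b)
  have hg : ∀ b a, (a < b ∧ rel a b) ↔ (b - g b ≤ a ∧ a < b) := by
    intro b a
    have hiff := card_interval_down ((Finset.Icc 1 n).filter (fun x => x < b ∧ rel x b)) b
      (by intro x hx; simp only [Finset.mem_filter] at hx; exact hx.2.1)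
      (by
        intro x hx y hy1 hy2
        simp only [Finset.mem_filter, Finset.mem_Icc] at hx ⊢
        have hbn := hbnd x b hx.2.2
        exact ⟨⟨by omega, by omega⟩, hy2, hup x y b hy1 hy2 hx.2.2⟩)
      a
    simp only [Finset.mem_filter, Finset.mem_Icc] at hiff
    constructor
    · intro ha
      have hb := hbnd a b ha.2
      exact (fun h' => ⟨h'.1, ha.1⟩) (hiff.mp ⟨⟨by omega, by omega⟩, ha.1, ha.2⟩)
    · intro ha
      have := hiff.mpr ⟨ha.1, ha.2⟩
      exact ⟨this.2.1, this.2.2⟩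
  -- cardinal bounds
  have hfb : ∀ b, 1 ≤ b → b ≤ n → b + f b ≤ n := by
    intro b h1 h2
    have hsub : ((Finset.Icc 1 n).filter (fun x => b < x ∧ rel x b)) ⊆ Finset.Ioc b n := by
      intro x hx
      simp only [Finset.mem_filter, Finset.mem_Icc] at hx
      simp only [Finset.mem_Ioc]
      omega
    have := Finset.card_le_card hsub
    rw [Nat.card_Ioc] at this
    show b + ((Finset.Icc 1 n).filter (fun x => b < x ∧ rel x b)).card ≤ n
    omega
  have hgb : ∀ b, 1 ≤ b → b ≤ n → g b < b := by
    intro b h1 h2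
    have hsub : ((Finset.Icc 1 n).filter (fun x => x < b ∧ rel x b)) ⊆ Finset.Ico 1 b := by
      intro x hx
      simp only [Finset.mem_filter, Finset.mem_Icc] at hx
      simp only [Finset.mem_Ico]
      omega
    have := Finset.card_le_card hsub
    rw [Nat.card_Ico] at this
    show ((Finset.Icc 1 n).filter (fun x => x < b ∧ rel x b)).card < b
    omega
  -- validity of the vectors
  have hfv : ValidR n f := by
    intro i h1 h2
    refine ⟨hfb i h1 h2, ?_⟩
    intro j hj1 hj2
    have hrelji : rel j i := ((hf i j).mpr ⟨hj1, hj2⟩).2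
    rcases Nat.eq_zero_or_pos (f j) with h0 | h0
    · omega
    · have hx : rel (j + f j) j := ((hf j (j + f j)).mpr ⟨by omega, le_refl _⟩).2
      have := htrans (j + f j) j i hx hrelji
      have := ((hf i (j + f j)).mp ⟨by omega, this⟩).2
      omega
  have hgv : ValidL n g := by
    intro i h1 h2
    refine ⟨hgb i h1 h2, ?_⟩
    intro j hjn hj1 hj2
    have hrelij : rel i j := ((hg j i).mpr ⟨hj2, hj1⟩).2
    rcases Nat.eq_zero_or_pos (g i) with h0 | h0
    · omega
    · have hgi := hgb i h1 h2
      have hx : rel (i - g i) i := ((hg i (i - g i)).mpr ⟨le_refl _, by omega⟩).2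
      have := htrans (i - g i) i j hx hrelij
      have := ((hg j (i - g i)).mp ⟨by omega, this⟩).1
      omega
  obtain ⟨hTsz, hTval⟩ := build_spec n f hfv
  obtain ⟨hT'sz, hT'val⟩ := buildL_spec n g hgv
  set T := build n f with hTdef
  set T' := buildL n g with hT'def
  -- pointwise comparison of the right vectors
  have hfle : ∀ k, rsub T k ≤ rsub T' k := by
    intro k
    by_cases hk : 1 ≤ k ∧ k ≤ n
    · rw [hTval k hk.1 hk.2]
      by_contra hcon
      push_neg at hcon
      set c := k + rsub T' k + 1 with hc
      have hcn : c ≤ n := by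
        have := hfb k hk.1 hk.2
        omega
      have hadj := adjacency T' k hk.1 (by omega) (by rw [hT'sz]; omega)
      rw [← hc] at hadj
      rw [hT'val c (by omega) hcn] at hadj
      have hrel1 : rel k c := ((hg c k).mpr ⟨hadj, by omega⟩).2
      have hrel2 : rel c k := ((hf k c).mpr ⟨by omega, by omega⟩).2
      exact hirr c (htrans c k c hrel2 hrel1)
    · rw [rsub_zero T k (by omega)]
      exact Nat.zero_le _
  refine ⟨T, T', hTsz, hT'sz, tamari_of_le (by rw [hTsz, hT'sz]) hfle, ?_⟩
  intro a b
  rcases lt_trichotomy a b with hab | hab | hab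
  · -- increasing relation
    constructor
    · intro hr
      have hb := hbnd a b hr
      refine Or.inr ?_
      rw [inc_iff]
      rw [hT'val b (by omega) (by omega)]
      have := ((hg b a).mp ⟨hab, hr⟩).1
      exact ⟨by omega, hab, this⟩
    · rintro (hd | hi)
      · rw [dec_iff] at hd; omega
      · rw [inc_iff] at hi
        have hb1 : 1 ≤ b := by omega
        have hbn : b ≤ n := by rw [hT'sz] at hi; omega
        rw [hT'val b hb1 hbn] at hi
        exact ((hg b a).mpr ⟨hi.2.2, hab⟩).2
  · subst hab
    constructor
    · intro hr; exact absurd hr (hirr a)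
    · rintro (hd | hi)
      · rw [dec_iff] at hd; omega
      · rw [inc_iff] at hi; omega
  · -- decreasing relation
    constructor
    · intro hr
      have hb := hbnd a b hr
      refine Or.inl ?_
      rw [dec_iff]
      rw [hTval b (by omega) (by omega)]
      have := ((hf b a).mp ⟨hab, hr⟩).2
      exact ⟨by omega, by omega, hab, this⟩
    · rintro (hd | hi)
      · rw [dec_iff] at hd
        have hb1 : 1 ≤ b := hd.1
        have hbn : b ≤ n := by rw [hTsz] at hd; omega
        rw [hTval b hb1 hbn] at hd
        exact ((hf b a).mpr ⟨hab, hd.2.2.2⟩).2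
      · rw [inc_iff] at hi; omega

end IPAux
/-- A poset `P` on `{1,…,n}` is an interval-poset iff there exist binary trees
`T ≤ T'` of size `n` in the Tamari order such that the relations of `P` are exactly those of
the decreasing forest `dec(T)` together with those of the increasing forest `inc(T')`. -/
theorem isIntervalPoset_iff (n : ℕ) (rel : ℕ → ℕ → Prop) :
    IsIntervalPoset n rel ↔
      ∃ T T' : BinTree, T.size = n ∧ T'.size = n ∧ TamariLE T T' ∧
        ∀ a b, rel a b ↔ IPrel T T' a b := by
  constructor
  · exact fun h => IPAux.exists_trees h
  · rintro ⟨T, T', hs, hs', ht, hiff⟩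
    obtain ⟨c1, c2, c3, c4, c5⟩ := IPAux.isIntervalPoset_of hs hs' ht
    exact ⟨fun a b hr => c1 a b ((hiff a b).mp hr),
      fun a hr => c2 a ((hiff a a).mp hr),
      fun a b c h1 h2 => (hiff a c).mpr (c3 a b c ((hiff a b).mp h1) ((hiff b c).mp h2)),
      fun a b c h1 h2 hr => (hiff b c).mpr (c4 a b c h1 h2 ((hiff a c).mp hr)),
      fun a b c h1 h2 hr => (hiff b a).mpr (c5 a b c h1 h2 ((hiff c a).mp hr))⟩
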